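/- Let G be a connected graph in which edges e_1,...,e_n form a cycle. Then the dual Dodgson polynomials satisfy φ^1 = Σ_{j=2}^{n} λ_j φ^{1,j} for suitable signs λ_j = ±1, where φ^1 = φ_{G//e_1} and φ^{1,j} are the dual Dodgson polynomials with respect to edges e_1, e_j. -/

import Mathlib

open scoped Classical

noncomputable section

/-- A finite multigraph with edges labelled by `Fin N`, each edge oriented
from its source `s e` to its target `t e`. -/
structure DodgsonGraph (N : ℕ) where
  V : Type
  [fV : Fintype V]
  [dV : DecidableEq V]
  s : Fin N → V
  t : Fin N → V

namespace DodgsonGraph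

variable {N : ℕ}

instance (G : DodgsonGraph N) : Fintype G.V := G.fV
instance (G : DodgsonGraph N) : DecidableEq G.V := G.dV

/-- The loop number (first Betti number) `h_G = N_G - |V| + 1` of a connected graph. -/
def loopNumber (G : DodgsonGraph N) : ℕ := N + 1 - Fintype.card G.V

/-- Adjacency of two vertices through an edge of the edge set `S` (ignoring orientation). -/
def Adj (G : DodgsonGraph N) (S : Finset (Fin N)) (u v : G.V) : Prop :=
  ∃ e ∈ S, (G.s e = u ∧ G.t e = v) ∨ (G.s e = v ∧ G.t e = u)

/-- The subgraph with edge set `S` (and all vertices) is connected. -/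
def ConnectedOn (G : DodgsonGraph N) (S : Finset (Fin N)) : Prop :=
  ∀ u v : G.V, Relation.ReflTransGen (G.Adj S) u v

def IsConnected (G : DodgsonGraph N) : Prop := G.ConnectedOn Finset.univ

/-- A spanning tree: a connected spanning subgraph with `|V| - 1` edges. -/
def IsSpanningTree (G : DodgsonGraph N) (T : Finset (Fin N)) : Prop :=
  G.ConnectedOn T ∧ T.card + 1 = Fintype.card G.V

/-- The dual graph polynomial `φ_G = Σ_{spanning trees T} Π_{e ∈ T} α_e`. -/
def dualPoly (G : DodgsonGraph N) : MvPolynomial (Fin N) ℤ :=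
  ∑ T ∈ Finset.univ.filter (fun T => G.IsSpanningTree T), ∏ e ∈ T, MvPolynomial.X e

/-- The Kirchhoff graph polynomial `Ψ_G = Σ_{spanning trees T} Π_{e ∉ T} α_e`. -/
def graphPoly (G : DodgsonGraph N) : MvPolynomial (Fin N) ℤ :=
  ∑ T ∈ Finset.univ.filter (fun T => G.IsSpanningTree T), ∏ e ∈ Tᶜ, MvPolynomial.X e

/-- The boundary map `∂ : ℤ^E → ℤ^V`, `e ↦ (target e) - (source e)`. -/
def bdry (G : DodgsonGraph N) (x : Fin N → ℤ) : G.V → ℤ := fun v =>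
  ∑ e, x e * ((if G.t e = v then 1 else 0) - (if G.s e = v then 1 else 0))

/-- `c ∈ ℤ^E` is (the pre-image of) an oriented cycle (topological loop):
its support is a cyclically ordered set of edges through distinct vertices,
with entry `+1` or `-1` according to whether the orientation of the edge
agrees with that of the cycle. -/
def IsCycleVector (G : DodgsonGraph N) (c : Fin N → ℤ) : Prop :=
  ∃ (n : ℕ) (_ : 0 < n) (f : Fin n → Fin N) (g : Fin n → G.V),
    Function.Injective f ∧ Function.Injective g ∧
    (∀ i : Fin n,
      (c (f i) = 1 ∧ G.s (f i) = g i ∧ G.t (f i) = g ⟨(i.val + 1) % n, Nat.mod_lt _ (Nat.lt_of_le_of_lt (Nat.zero_le _) i.isLt)⟩) ∨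
      (c (f i) = -1 ∧ G.t (f i) = g i ∧ G.s (f i) = g ⟨(i.val + 1) % n, Nat.mod_lt _ (Nat.lt_of_le_of_lt (Nat.zero_le _) i.isLt)⟩)) ∧
    (∀ e : Fin N, e ∉ Set.range f → c e = 0)

/-- A basis of small cycles: (i) each `C i` is an oriented cycle, (ii) the `C i`
generate `H_1(G,ℤ) = ker ∂`, and (iii) if `C i + Σ_{j ≠ i} λ_j C j = μ c` with
`c ∈ H_1(G,ℤ)` and `μ ≠ 0`, then `μ = ±1`. -/
def IsSmallCycleBasis (G : DodgsonGraph N) (C : Fin G.loopNumber → Fin N → ℤ) : Prop :=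
  (∀ i, G.IsCycleVector (C i)) ∧
  (∀ c : Fin N → ℤ, G.bdry c = 0 → c ∈ Submodule.span ℤ (Set.range C)) ∧
  (∀ (i : Fin G.loopNumber) (lam : Fin G.loopNumber → ℤ) (c : Fin N → ℤ) (μ : ℤ),
    G.bdry c = 0 → μ ≠ 0 →
    C i + ∑ j ∈ Finset.univ.erase i, lam j • C j = μ • c → μ = 1 ∨ μ = -1)

/-- `G` has a cycle (closed walk through distinct edges and distinct vertices)
of length `n`. -/
def HasCycleOfLength (G : DodgsonGraph N) (n : ℕ) : Prop :=
  ∃ (f : Fin n → Fin N) (g : Fin n → G.V),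
    Function.Injective f ∧ Function.Injective g ∧
    ∀ i : Fin n, (G.s (f i) = g i ∧ G.t (f i) = g ⟨(i.val + 1) % n, Nat.mod_lt _ (Nat.lt_of_le_of_lt (Nat.zero_le _) i.isLt)⟩) ∨
      (G.t (f i) = g i ∧ G.s (f i) = g ⟨(i.val + 1) % n, Nat.mod_lt _ (Nat.lt_of_le_of_lt (Nat.zero_le _) i.isLt)⟩)

/-- The matrix `L_G = [[Δ(α), F^t], [-F, 0]]`, where `F` is the cycle-edge
incidence matrix of a basis of small cycles `C`. -/
def LG (G : DodgsonGraph N) (C : Fin G.loopNumber → Fin N → ℤ) :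
    Matrix (Fin (N + G.loopNumber)) (Fin (N + G.loopNumber)) (MvPolynomial (Fin N) ℤ) :=
  Matrix.reindex finSumFinEquiv finSumFinEquiv
    (Matrix.fromBlocks
      (Matrix.diagonal fun e => MvPolynomial.X e)
      (Matrix.of fun e i => ((C i e : ℤ) : MvPolynomial (Fin N) ℤ))
      (Matrix.of fun i e => ((-(C i e) : ℤ) : MvPolynomial (Fin N) ℤ))
      (0 : Matrix (Fin G.loopNumber) (Fin G.loopNumber) (MvPolynomial (Fin N) ℤ)))

end DodgsonGraph

/-- The determinant of the minor of `M` obtained by deleting the rows indexed by `I`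
and the columns indexed by `J`, with rows and columns of the minor enumerated in
increasing order (and `0` if the sizes do not match). -/
def minorDet {R : Type} [CommRing R] {m : ℕ}
    (M : Matrix (Fin m) (Fin m) R) (I J : Finset (Fin m)) : R :=
  if h : (Iᶜ : Finset (Fin m)).card = (Jᶜ : Finset (Fin m)).card then
    Matrix.det (Matrix.of fun i j : Fin (Iᶜ : Finset (Fin m)).card =>
      M (((Iᶜ : Finset (Fin m)).orderIsoOfFin rfl i).1)
        (((Jᶜ : Finset (Fin m)).orderIsoOfFin h.symm j).1))
  else 0

namespace DodgsonGraph

/-- The dual Dodgson polynomial `φ^{I,J}_{G,K} = det L_G(I,J)|_{α_K = 0}`: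
the determinant of `L_G` with the rows labelled by the edges of `I` and the
columns labelled by the edges of `J` deleted, and the variables of `K` set to zero. -/
def dualDodgson {N : ℕ} (G : DodgsonGraph N) (C : Fin G.loopNumber → Fin N → ℤ)
    (I J K : Finset (Fin N)) : MvPolynomial (Fin N) ℤ :=
  MvPolynomial.aeval
    (fun e => if e ∈ K then (0 : MvPolynomial (Fin N) ℤ) else MvPolynomial.X e)
    (minorDet (G.LG C) (I.image (Fin.castAdd G.loopNumber)) (J.image (Fin.castAdd G.loopNumber)))

/-- Edges `e1 e2 e3` form a triangle on distinct vertices `u v w`, with the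
edges oriented consistently along the triangle. -/
def HasOrientedTriangle (G : DodgsonGraph N) (e1 e2 e3 : Fin N) : Prop :=
  ∃ u v w : G.V, u ≠ v ∧ v ≠ w ∧ u ≠ w ∧
    G.s e1 = u ∧ G.t e1 = v ∧ G.s e2 = v ∧ G.t e2 = w ∧ G.s e3 = w ∧ G.t e3 = u

/-- Edges `e1 e2 e3 e4` bound a 4-face (a 4-cycle on distinct vertices), with
`e1, e2` adjacent and `e1, e3` opposite, oriented consistently along the face. -/
def HasOrientedQuadFace (G : DodgsonGraph N) (e1 e2 e3 e4 : Fin N) : Prop :=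
  ∃ p q r s : G.V, p ≠ q ∧ p ≠ r ∧ p ≠ s ∧ q ≠ r ∧ q ≠ s ∧ r ≠ s ∧
    G.s e1 = p ∧ G.t e1 = q ∧ G.s e2 = q ∧ G.t e2 = r ∧
    G.s e3 = r ∧ G.t e3 = s ∧ G.s e4 = s ∧ G.t e4 = p

end DodgsonGraph

/-- `[f_1,…,f_k]_q`: the number of `F_q`-rational common zeros in `F^n` of a finite
set of integer polynomials (coefficients reduced to the finite field `F`). -/
def countZeros (F : Type) [Field F] [Fintype F] {n : ℕ}
    (S : Finset (MvPolynomial (Fin n) ℤ)) : ℕ :=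
  Nat.card {x : Fin n → F // ∀ p ∈ S, MvPolynomial.aeval x p = 0}

end


section Aux

open Matrix Finset

lemma aux_compl_singleton_card {m : ℕ} (r : Fin (m+1)) :
    (({r}ᶜ : Finset (Fin (m+1))).card) = m := by
  simp [Finset.card_compl]

lemma aux_orderEmb_compl_singleton {m : ℕ} (r : Fin (m+1)) (i : Fin m) :
    (({r}ᶜ : Finset (Fin (m+1))).orderEmbOfFin (aux_compl_singleton_card r)) i
      = r.succAbove i := by
  have := Finset.orderEmbOfFin_unique (f := r.succAbove) (aux_compl_singleton_card r)
    (fun x => by simp [Fin.succAbove_ne r x]) (Fin.strictMono_succAbove r)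
  exact (congrFun this i).symm

lemma aux_minorDet_singleton {R : Type} [CommRing R] {m : ℕ}
    (M : Matrix (Fin (m+1)) (Fin (m+1)) R) (r j : Fin (m+1)) :
    minorDet M {r} {j} = Matrix.det (M.submatrix r.succAbove j.succAbove) := by
  have h : (({r}ᶜ : Finset (Fin (m+1))).card) = (({j}ᶜ : Finset (Fin (m+1))).card) := by
    simp [Finset.card_compl]
  rw [minorDet, dif_pos h]
  have hr := aux_compl_singleton_card r
  have key : (Matrix.of fun a b : Fin (({r}ᶜ : Finset (Fin (m+1))).card) =>
      M ((({r}ᶜ : Finset (Fin (m+1))).orderIsoOfFin rfl a).1)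
        ((({j}ᶜ : Finset (Fin (m+1))).orderIsoOfFin h.symm b).1))
      = Matrix.reindex (finCongr hr).symm (finCongr hr).symm
          (M.submatrix r.succAbove j.succAbove) := by
    ext a b
    simp only [Matrix.reindex_apply, Matrix.submatrix_apply, Matrix.of_apply,
      Equiv.symm_symm, finCongr_apply]
    rw [Finset.coe_orderIsoOfFin_apply, Finset.coe_orderIsoOfFin_apply]
    congr 1
    · exact aux_orderEmb_compl_singleton r (Fin.cast hr a)
    · have : (({j}ᶜ : Finset (Fin (m+1))).orderEmbOfFin (aux_compl_singleton_card j))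
          (Fin.cast hr b) = j.succAbove (Fin.cast hr b) := aux_orderEmb_compl_singleton j _
      rw [← this]
      exact Finset.orderEmbOfFin_eq_orderEmbOfFin_iff.mpr rfl
  rw [key, Matrix.det_reindex_self]

lemma aux_det_expand_minorDet {R : Type} [CommRing R] {m : ℕ}
    (M : Matrix (Fin (m+1)) (Fin (m+1)) R) (r : Fin (m+1)) :
    Matrix.det M = ∑ j : Fin (m+1), (-1) ^ ((r:ℕ) + (j:ℕ)) * M r j * minorDet M {r} {j} := by
  rw [Matrix.det_succ_row M r]
  exact Finset.sum_congr rfl fun j _ => by rw [aux_minorDet_singleton]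

lemma aux_minorDet_updateRow {R : Type} [CommRing R] {m : ℕ}
    (M : Matrix (Fin (m+1)) (Fin (m+1)) R) (r j : Fin (m+1)) (u : Fin (m+1) → R) :
    minorDet (M.updateRow r u) {r} {j} = minorDet M {r} {j} := by
  rw [aux_minorDet_singleton, aux_minorDet_singleton]
  congr 1
  ext a b
  simp [Matrix.submatrix_apply, Matrix.updateRow_ne (Fin.succAbove_ne r a)]

lemma aux_alien_cofactor_succ {R : Type} [CommRing R] {m : ℕ}
    (M : Matrix (Fin (m+1)) (Fin (m+1)) R) (r k : Fin (m+1)) (hk : k ≠ r) :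
    ∑ j : Fin (m+1), (-1) ^ ((r:ℕ) + (j:ℕ)) * M k j * minorDet M {r} {j} = 0 := by
  have h0 : Matrix.det (M.updateRow r (M k)) = 0 := Matrix.det_updateRow_eq_zero hk
  rw [aux_det_expand_minorDet (M.updateRow r (M k)) r] at h0
  rw [← h0]
  refine Finset.sum_congr rfl fun j _ => ?_
  rw [aux_minorDet_updateRow, Matrix.updateRow_self]

lemma aux_alien_cofactor {R : Type} [CommRing R] {m : ℕ}
    (M : Matrix (Fin m) (Fin m) R) (r k : Fin m) (hk : k ≠ r) :
    ∑ j : Fin m, (-1) ^ ((r:ℕ) + (j:ℕ)) * M k j * minorDet M {r} {j} = 0 := by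
  obtain ⟨m', rfl⟩ : ∃ m', m = m' + 1 := ⟨m - 1, (Nat.succ_pred_eq_of_pos r.pos).symm⟩
  exact aux_alien_cofactor_succ M r k hk

lemma aux_dualDodgson_empty {N : ℕ} (G : DodgsonGraph N) (C : Fin G.loopNumber → Fin N → ℤ)
    (I J : Finset (Fin N)) :
    G.dualDodgson C I J ∅ =
      minorDet (G.LG C) (I.image (Fin.castAdd G.loopNumber))
        (J.image (Fin.castAdd G.loopNumber)) := by
  rw [DodgsonGraph.dualDodgson]
  rw [show (fun e => if e ∈ (∅ : Finset (Fin N)) then (0 : MvPolynomial (Fin N) ℤ)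
      else MvPolynomial.X e) = MvPolynomial.X from funext fun e => by simp]
  exact MvPolynomial.aeval_X_left_apply _

lemma aux_cycle_vector (N n : ℕ) (hn : 0 < n) (G : DodgsonGraph N)
    (f : Fin n → Fin N) (g : Fin n → G.V)
    (hf : Function.Injective f)
    (hcyc : ∀ i : Fin n,
      (G.s (f i) = g i ∧
        G.t (f i) = g ⟨(i.val + 1) % n, Nat.mod_lt _ hn⟩) ∨
      (G.t (f i) = g i ∧
        G.s (f i) = g ⟨(i.val + 1) % n, Nat.mod_lt _ hn⟩)) :
    ∃ c : Fin N → ℤ, G.bdry c = 0 ∧ (∀ e, (∀ i, f i ≠ e) → c e = 0) ∧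
      (∀ i, c (f i) = 1 ∨ c (f i) = -1) := by
  set nxt : Fin n → Fin n := fun i => ⟨(i.val + 1) % n, Nat.mod_lt _ hn⟩ with hnxt
  set d : Fin n → ℤ := fun i =>
    if G.s (f i) = g i ∧ G.t (f i) = g (nxt i) then 1 else -1 with hd
  refine ⟨fun e => ∑ i, if f i = e then d i else 0, ?_, ?_, ?_⟩
  · -- boundary is zero
    funext v
    rw [DodgsonGraph.bdry]
    have hrw : ∀ e : Fin N,
        (∑ i, if f i = e then d i else 0) *
          ((if G.t e = v then (1:ℤ) else 0) - (if G.s e = v then 1 else 0))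
        = ∑ i, if f i = e then d i *
            ((if G.t (f i) = v then (1:ℤ) else 0) - (if G.s (f i) = v then 1 else 0)) else 0 := by
      intro e
      rw [Finset.sum_mul]
      refine Finset.sum_congr rfl fun i _ => ?_
      split
      · next h => subst h; ring
      · ring
    simp only [hrw]
    rw [Finset.sum_comm]
    have hcollapse : ∀ i : Fin n,
        (∑ e : Fin N, if f i = e then d i *
            ((if G.t (f i) = v then (1:ℤ) else 0) - (if G.s (f i) = v then 1 else 0)) else 0)
        = d i * ((if G.t (f i) = v then (1:ℤ) else 0) - (if G.s (f i) = v then 1 else 0)) := by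
      intro i
      rw [Finset.sum_ite_eq]
      simp
    simp only [hcollapse]
    have hterm : ∀ i : Fin n,
        d i * ((if G.t (f i) = v then (1:ℤ) else 0) - (if G.s (f i) = v then 1 else 0))
        = (if g (nxt i) = v then (1:ℤ) else 0) - (if g i = v then 1 else 0) := by
      intro i
      by_cases hcond : G.s (f i) = g i ∧ G.t (f i) = g (nxt i)
      · rw [hd]
        simp only [if_pos hcond]
        rw [hcond.1, hcond.2]
        ring
      · have h2 : G.t (f i) = g i ∧ G.s (f i) = g (nxt i) := (hcyc i).resolve_left hcond
        rw [hd]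
        simp only [if_neg hcond]
        rw [h2.1, h2.2]
        ring
    simp only [hterm]
    rw [Finset.sum_sub_distrib]
    have hbij : Function.Bijective nxt := by
      rw [Finite.injective_iff_bijective.symm]
      intro a b hab
      have hab' : (a.val + 1) % n = (b.val + 1) % n := congrArg Fin.val hab
      have ha := a.isLt
      have hb := b.isLt
      apply Fin.ext
      by_cases h1 : a.val + 1 = n <;> by_cases h2 : b.val + 1 = n
      · omega
      · rw [h1, Nat.mod_self, Nat.mod_eq_of_lt (by omega)] at hab'; omega
      · rw [h2, Nat.mod_self, Nat.mod_eq_of_lt (by omega)] at hab'; omega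
      · rw [Nat.mod_eq_of_lt (by omega), Nat.mod_eq_of_lt (by omega)] at hab'; omega
    rw [Fintype.sum_bijective nxt hbij _ (fun i => if g i = v then (1:ℤ) else 0) (fun i => rfl)]
    exact sub_self _
  · intro e he
    exact Finset.sum_eq_zero fun i _ => if_neg (he i)
  · intro i
    show (∑ i', if f i' = f i then d i' else (0:ℤ)) = 1 ∨
      (∑ i', if f i' = f i then d i' else (0:ℤ)) = -1
    have : (∑ i', if f i' = f i then d i' else 0) = d i := by
      rw [Finset.sum_eq_single i (fun i' _ hne => if_neg (fun h => hne (hf h)))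
        (fun h => absurd (Finset.mem_univ i) h)]
      exact if_pos rfl
    rw [this, hd]
    by_cases hcond : G.s (f i) = g i ∧ G.t (f i) = g (nxt i)
    · left; simp [hcond]
    · right; simp [hcond]

end Aux

/-- if the edges `f 0, …, f (n-1)` form a cycle of `G`, then
`φ^1 = Σ_{j≠1} λ_j φ^{1,j}` for suitable signs `λ_j = ±1`, where
`φ^1 = φ_{G//e_1}` and `φ^{1,j}` are dual Dodgson polynomials. -/
theorem statement9 (N n : ℕ) (hn : 0 < n) (G : DodgsonGraph N) [Nonempty G.V]
    (hconn : G.IsConnected)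
    (C : Fin G.loopNumber → Fin N → ℤ) (hC : G.IsSmallCycleBasis C)
    (f : Fin n → Fin N) (g : Fin n → G.V)
    (hf : Function.Injective f) (hg : Function.Injective g)
    (hcyc : ∀ i : Fin n,
      (G.s (f i) = g i ∧
        G.t (f i) = g ⟨(i.val + 1) % n, Nat.mod_lt _ hn⟩) ∨
      (G.t (f i) = g i ∧
        G.s (f i) = g ⟨(i.val + 1) % n, Nat.mod_lt _ hn⟩)) :
    ∃ lam : Fin n → ℤ, (∀ j, j ≠ (⟨0, hn⟩ : Fin n) → lam j = 1 ∨ lam j = -1) ∧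
      G.dualDodgson C {f ⟨0, hn⟩} {f ⟨0, hn⟩} ∅ =
        ∑ j ∈ Finset.univ.erase (⟨0, hn⟩ : Fin n),
          lam j • G.dualDodgson C {f ⟨0, hn⟩} {f j} ∅ := by
  classical
  obtain ⟨c, hbdry, hsupp, hval⟩ := aux_cycle_vector N n hn G f g hf hcyc
  obtain ⟨lamC, hlamC⟩ := (Submodule.mem_span_range_iff_exists_fun ℤ).mp (hC.2.1 c hbdry)
  set i0 : Fin n := ⟨0, hn⟩ with hi0
  set r : Fin (N + G.loopNumber) := Fin.castAdd G.loopNumber (f i0) with hr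
  set M := G.LG C with hM
  set D : Fin N → MvPolynomial (Fin N) ℤ :=
    fun e => minorDet M {r} {Fin.castAdd G.loopNumber e} with hD
  have hent1 : ∀ (i : Fin G.loopNumber) (e : Fin N),
      M (Fin.natAdd N i) (Fin.castAdd G.loopNumber e)
        = ((-(C i e) : ℤ) : MvPolynomial (Fin N) ℤ) := by
    intro i e
    rw [hM, DodgsonGraph.LG]
    simp
  have hent2 : ∀ (i i' : Fin G.loopNumber),
      M (Fin.natAdd N i) (Fin.natAdd N i') = 0 := by
    intro i i'
    rw [hM, DodgsonGraph.LG]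
    simp
  have hrel : ∀ i : Fin G.loopNumber,
      ∑ e : Fin N, (-1 : MvPolynomial (Fin N) ℤ) ^ ((r : ℕ) + (e : ℕ))
        * ((C i e : ℤ) : MvPolynomial (Fin N) ℤ) * D e = 0 := by
    intro i
    have hkr : Fin.natAdd N i ≠ r := by
      intro h
      have h2 := congrArg Fin.val h
      have h3 := (f i0).isLt
      simp [hr, Fin.coe_natAdd, Fin.coe_castAdd] at h2
      omega
    have h0 := aux_alien_cofactor M r (Fin.natAdd N i) hkr
    rw [← Equiv.sum_comp finSumFinEquiv
      (fun j => (-1 : MvPolynomial (Fin N) ℤ) ^ ((r : ℕ) + (j : ℕ))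
        * M (Fin.natAdd N i) j * minorDet M {r} {j})] at h0
    rw [Fintype.sum_sum_type] at h0
    simp only [finSumFinEquiv_apply_left, finSumFinEquiv_apply_right] at h0
    have hzero : ∀ i' : Fin G.loopNumber,
        (-1 : MvPolynomial (Fin N) ℤ) ^ ((r : ℕ) + ((Fin.natAdd N i' : Fin (N + G.loopNumber)) : ℕ))
          * M (Fin.natAdd N i) (Fin.natAdd N i') * minorDet M {r} {Fin.natAdd N i'} = 0 := by
      intro i'
      rw [hent2 i i', mul_zero, zero_mul]
    rw [Finset.sum_congr rfl (fun i' _ => hzero i'), Finset.sum_const_zero, add_zero] at h0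
    have hneg : ∀ e : Fin N,
        (-1 : MvPolynomial (Fin N) ℤ) ^ ((r : ℕ) + ((Fin.castAdd G.loopNumber e : Fin (N + G.loopNumber)) : ℕ))
          * M (Fin.natAdd N i) (Fin.castAdd G.loopNumber e) * minorDet M {r} {Fin.castAdd G.loopNumber e}
        = -((-1 : MvPolynomial (Fin N) ℤ) ^ ((r : ℕ) + (e : ℕ))
            * ((C i e : ℤ) : MvPolynomial (Fin N) ℤ) * D e) := by
      intro e
      rw [hent1 i e, hD]
      push_cast
      simp only [Fin.coe_castAdd]
      ring
    rw [Finset.sum_congr rfl (fun e _ => hneg e), Finset.sum_neg_distrib] at h0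
    exact neg_eq_zero.mp h0
  have hckey : ∀ e, c e = ∑ i, lamC i * C i e := by
    intro e
    rw [← hlamC]
    simp [Finset.sum_apply, Pi.smul_apply, smul_eq_mul]
  have hmain : ∑ e : Fin N, (-1 : MvPolynomial (Fin N) ℤ) ^ ((r : ℕ) + (e : ℕ))
      * ((c e : ℤ) : MvPolynomial (Fin N) ℤ) * D e = 0 := by
    have step : ∀ e : Fin N,
        (-1 : MvPolynomial (Fin N) ℤ) ^ ((r : ℕ) + (e : ℕ))
          * ((c e : ℤ) : MvPolynomial (Fin N) ℤ) * D e
        = ∑ i, ((lamC i : ℤ) : MvPolynomial (Fin N) ℤ)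
            * ((-1 : MvPolynomial (Fin N) ℤ) ^ ((r : ℕ) + (e : ℕ))
              * ((C i e : ℤ) : MvPolynomial (Fin N) ℤ) * D e) := by
      intro e
      rw [hckey e]
      push_cast
      rw [Finset.mul_sum, Finset.sum_mul]
      exact Finset.sum_congr rfl fun i _ => by ring
    rw [Finset.sum_congr rfl (fun e _ => step e), Finset.sum_comm]
    refine Finset.sum_eq_zero fun i _ => ?_
    rw [← Finset.mul_sum, hrel i, mul_zero]
  set F : Fin N → MvPolynomial (Fin N) ℤ := fun e =>
    (-1 : MvPolynomial (Fin N) ℤ) ^ ((r : ℕ) + (e : ℕ))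
      * ((c e : ℤ) : MvPolynomial (Fin N) ℤ) * D e with hF
  have hrestr : ∑ i : Fin n, F (f i) = 0 := by
    have h1 : ∑ e ∈ Finset.univ.image f, F e = ∑ i : Fin n, F (f i) :=
      Finset.sum_image (fun a _ b _ h => hf h)
    have h2 : ∑ e ∈ Finset.univ.image f, F e = ∑ e : Fin N, F e := by
      refine Finset.sum_subset (Finset.subset_univ _) (fun e _ he => ?_)
      have hce : c e = 0 :=
        hsupp e (fun i hfe => he (Finset.mem_image.mpr ⟨i, Finset.mem_univ i, hfe⟩))
      rw [hF]
      simp only [hce]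
      push_cast
      ring
    rw [← h1, h2]
    exact hmain
  set T : Fin n → ℤ := fun i => (-1) ^ ((r : ℕ) + ((f i : Fin N) : ℕ)) * c (f i) with hT
  have hTpm : ∀ i, T i = 1 ∨ T i = -1 := by
    intro i
    rcases hval i with h | h <;>
      rcases Nat.even_or_odd ((r : ℕ) + ((f i : Fin N) : ℕ)) with hp | hp <;>
        simp [hT, h, hp.neg_one_pow]
  have hmain3 : ∑ i : Fin n, ((T i : ℤ) : MvPolynomial (Fin N) ℤ) * D (f i) = 0 := by
    rw [← hrestr]
    refine Finset.sum_congr rfl fun i _ => ?_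
    rw [hT, hF]
    push_cast
    ring
  rw [← Finset.add_sum_erase _ _ (Finset.mem_univ i0)] at hmain3
  refine ⟨fun j => -(T i0 * T j), ?_, ?_⟩
  · intro j _
    rcases hTpm i0 with h0 | h0 <;> rcases hTpm j with h1 | h1 <;> simp [h0, h1]
  · simp only [aux_dualDodgson_empty, Finset.image_singleton, ← hr, ← hD]
    have hstep : ∑ j ∈ Finset.univ.erase i0, (-(T i0 * T j)) • D (f j)
        = (-(T i0 : MvPolynomial (Fin N) ℤ))
          * ∑ j ∈ Finset.univ.erase i0, ((T j : ℤ) : MvPolynomial (Fin N) ℤ) * D (f j) := by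
      rw [Finset.mul_sum]
      refine Finset.sum_congr rfl fun j _ => ?_
      rw [zsmul_eq_mul]
      push_cast
      ring
    rw [hstep, eq_neg_of_add_eq_zero_right hmain3]
    have hTT : ((T i0 : ℤ) : MvPolynomial (Fin N) ℤ) * ((T i0 : ℤ) : MvPolynomial (Fin N) ℤ) = 1 := by
      rcases hTpm i0 with h | h <;> rw [h] <;> norm_num
    rw [neg_mul_neg, ← mul_assoc, hTT, one_mul]
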